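/- Fix an integer n ≥ 2, and define integers N_k by N_1 = n and N_{k+1} = n·N_kⁿ. Then for every k ≥ 1 there exists a polynomial P_k in two variables b, w with integer coefficients such that: (i) for all b, w ∈ ℂ one has g_b^{∘k}(w) = P_k(b,w)/N_k; (ii) regarded as a polynomial in w with coefficients in ℤ[b], P_k is monic of degree n^k; and (iii) regarded as a polynomial in b with coefficients in ℤ[w], P_k is monic of degree n^{k-1}. -/

import Mathlib

/-- Evaluate a bivariate integer polynomial (an element of `(ℤ[b])[w]`, with the
inner variable `b` and outer variable `w`) at the complex numbers `x` (inner
variable) and `y` (outer variable). -/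
noncomputable def evalBW (x y : ℂ) (P : Polynomial (Polynomial ℤ)) : ℂ :=
  Polynomial.eval₂ (Polynomial.eval₂RingHom (Int.castRingHom ℂ) x) y P

@[simp] theorem eval2_intCast_inner (x : ℂ) (j : ℤ) :
    Polynomial.eval₂ (Int.castRingHom ℂ) x (j : Polynomial ℤ) = (j : ℂ) :=
  map_intCast (Polynomial.eval₂RingHom (Int.castRingHom ℂ) x) j

@[simp] theorem eval2_intCast_outer (x y : ℂ) (j : ℤ) :
    Polynomial.eval₂ (Polynomial.eval₂RingHom (Int.castRingHom ℂ) x) y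
      (j : Polynomial (Polynomial ℤ)) = (j : ℂ) :=
  map_intCast (Polynomial.eval₂RingHom (Polynomial.eval₂RingHom (Int.castRingHom ℂ) x) y) j

open Polynomial in
theorem stmt6 (n : ℕ) (hn : 2 ≤ n) (N : ℕ → ℂ) (hN1 : N 1 = n)
    (hNrec : ∀ k, 1 ≤ k → N (k + 1) = n * (N k) ^ n) :
    ∀ k, 1 ≤ k → ∃ P : Polynomial (Polynomial ℤ),
      -- (i) for all `b, w ∈ ℂ`, `g_b^{∘k}(w) = P_k(b, w) / N_k`
      (∀ b w : ℂ, (fun z : ℂ => (z ^ n + b) / n)^[k] w = evalBW b w P / N k) ∧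
      -- (ii) as a polynomial in `w` over `ℤ[b]`, `P_k` is monic of degree `n ^ k`
      P.Monic ∧ P.natDegree = n ^ k ∧
      -- (iii) as a polynomial in `b` over `ℤ[w]` (i.e. with the variables swapped),
      -- `P_k` is monic of degree `n ^ (k - 1)`
      ∃ Q : Polynomial (Polynomial ℤ),
        (∀ b w : ℂ, evalBW w b Q = evalBW b w P) ∧
        Q.Monic ∧ Q.natDegree = n ^ (k - 1) := by
  have hnn : 0 < n := by omega
  have hn0 : (n : ℂ) ≠ 0 := Nat.cast_ne_zero.mpr (by omega)
  suffices h : ∀ k, 1 ≤ k → ∃ m : ℤ, (m : ℂ) ≠ 0 ∧ N k = (m : ℂ) ∧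
      ∃ P : Polynomial (Polynomial ℤ),
      (∀ b w : ℂ, (fun z : ℂ => (z ^ n + b) / n)^[k] w = evalBW b w P / (m : ℂ)) ∧
      P.Monic ∧ P.natDegree = n ^ k ∧
      ∃ Q : Polynomial (Polynomial ℤ),
        (∀ b w : ℂ, evalBW w b Q = evalBW b w P) ∧
        Q.Monic ∧ Q.natDegree = n ^ (k - 1) by
    intro k hk
    obtain ⟨m, _, hNm, P, hev, rest⟩ := h k hk
    exact ⟨P, fun b w => by rw [hNm]; exact hev b w, rest⟩
  intro k hk
  induction k with
  | zero => omega
  | succ k ih =>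
    rcases Nat.lt_or_ge k 1 with hk1 | hk1
    · -- base case: k = 0, exponent 1
      interval_cases k
      refine ⟨(n : ℤ), by exact_mod_cast hn0, by push_cast [hN1]; ring,
        X ^ n + C X, ?_, ?_, ?_, ?_⟩
      · intro b w
        simp [evalBW, Function.iterate_one, eval₂_pow]
      · exact (monic_X_pow n).add_of_left (by
          rw [degree_X_pow, degree_C X_ne_zero]
          exact_mod_cast hnn)
      · simpa using natDegree_X_pow_add_C (n := n) (r := (X : Polynomial ℤ))
      · refine ⟨X + C (X ^ n), ?_, monic_X_add_C _, by rw [natDegree_X_add_C]; norm_num⟩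
        intro b w
        simp [evalBW, eval₂_pow]
        ring
    · -- inductive step, k ≥ 1
      obtain ⟨m, hm0, hNm, P, hev, hPm, hPd, Q, hQP, hQm, hQd⟩ := ih hk1
      have hdP : (P ^ n).degree = ((n * n ^ k : ℕ) : WithBot ℕ) := by
        rw [degree_eq_natDegree (hPm.pow n).ne_zero, natDegree_pow, hPd]
      have hltP : (C (C (m ^ n) * X) : Polynomial (Polynomial ℤ)).degree < (P ^ n).degree := by
        refine lt_of_le_of_lt degree_C_le ?_
        rw [hdP]
        exact_mod_cast Nat.mul_pos hnn (Nat.pow_pos (n := k) hnn)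
      have hdQ : (Q ^ n).degree = ((n * n ^ (k - 1) : ℕ) : WithBot ℕ) := by
        rw [degree_eq_natDegree (hQm.pow n).ne_zero, natDegree_pow, hQd]
      have h1lt : 1 < n * n ^ (k - 1) := by
        have h1 : 1 ≤ n ^ (k - 1) := Nat.one_le_pow _ _ hnn
        calc 1 < n := by omega
          _ = n * 1 := (mul_one n).symm
          _ ≤ n * n ^ (k - 1) := Nat.mul_le_mul_left n h1
      have hltQ : (C (C (m ^ n)) * X : Polynomial (Polynomial ℤ)).degree < (Q ^ n).degree := by
        refine lt_of_le_of_lt (degree_C_mul_X_le _) ?_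
        rw [hdQ]
        exact_mod_cast h1lt
      have hkk : k - 1 + 1 = k := by omega
      refine ⟨n * m ^ n, ?_, ?_, P ^ n + C (C (m ^ n) * X), ?_, ?_, ?_, ?_⟩
      · push_cast
        exact mul_ne_zero hn0 (pow_ne_zero _ hm0)
      · rw [hNrec k hk1, hNm]; push_cast; ring
      · intro b w
        rw [Function.iterate_succ_apply', hev b w]
        have hEP : evalBW b w (P ^ n + C (C (m ^ n) * X))
            = (evalBW b w P) ^ n + (m : ℂ) ^ n * b := by
          simp [evalBW, eval₂_pow]
        rw [hEP]
        push_cast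
        field_simp
        rw [add_mul, div_pow, div_mul_cancel₀ _ (pow_ne_zero _ hm0)]
      · exact (hPm.pow n).add_of_left hltP
      · rw [natDegree_add_eq_left_of_degree_lt hltP, natDegree_pow, hPd, pow_succ]
        ring
      · refine ⟨Q ^ n + C (C (m ^ n)) * X, ?_, (hQm.pow n).add_of_left hltQ, ?_⟩
        · intro b w
          have h1 : evalBW w b (Q ^ n + C (C (m ^ n)) * X)
              = (evalBW w b Q) ^ n + (m : ℂ) ^ n * b := by
            simp [evalBW, eval₂_pow]
          have h2 : evalBW b w (P ^ n + C (C (m ^ n) * X))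
              = (evalBW b w P) ^ n + (m : ℂ) ^ n * b := by
            simp [evalBW, eval₂_pow]
          rw [h1, h2, hQP]
        · rw [natDegree_add_eq_left_of_degree_lt hltQ, natDegree_pow, hQd]
          simp only [Nat.add_sub_cancel]
          rw [← pow_succ', hkk]
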